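/- Let ε ≠ 0, γ > 0, E₀ > |ε|, and τ > 0. Suppose E : [0, τ] → ℝ is continuous, E(0) = E₀, E(τ) = |ε|, E(t) > |ε| for all t ∈ [0, τ), and E is differentiable on (0, τ) with E′(t) = −γ(E(t) − √(E(t)² − ε²)) for all t ∈ (0, τ). Then τ = (1/(2γ)) · [E₀(E₀ + √(E₀² − ε²))/ε² − ln((E₀ + √(E₀² − ε²))/|ε|) − 1]. -/

import Mathlib

open Real Set

private lemma F_hasDerivAt (ε γ : ℝ) (hε : ε ≠ 0) (hγ : 0 < γ) {x : ℝ} (hx : |ε| < x) :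
    HasDerivAt (fun y => (1/(2*γ*ε^2)) * (y^2 + y * Real.sqrt (y^2-ε^2)
      - ε^2 * Real.log (y + Real.sqrt (y^2-ε^2))))
      ((x + Real.sqrt (x^2-ε^2))/(γ*ε^2)) x := by
  have hxpos : 0 < x := lt_of_le_of_lt (abs_nonneg ε) hx
  have hd : 0 < x^2 - ε^2 := by nlinarith [abs_nonneg ε, sq_abs ε]
  set s := Real.sqrt (x^2 - ε^2) with hs
  have hspos : 0 < s := Real.sqrt_pos.mpr hd
  have hssq : s^2 = x^2 - ε^2 := Real.sq_sqrt hd.le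
  have h1 : HasDerivAt (fun y : ℝ => y^2 - ε^2) (2*x) x := by
    simpa using (hasDerivAt_pow 2 x).sub_const (ε^2)
  have h2 : HasDerivAt (fun y => Real.sqrt (y^2-ε^2)) (1/(2*s) * (2*x)) x :=
    (Real.hasDerivAt_sqrt hd.ne').comp x h1
  have h3 : HasDerivAt (fun y => y * Real.sqrt (y^2-ε^2)) (1 * s + x * (1/(2*s)*(2*x))) x :=
    (hasDerivAt_id x).mul h2
  have hxs : x + s ≠ 0 := by positivity
  have h4 : HasDerivAt (fun y => y + Real.sqrt (y^2-ε^2)) (1 + 1/(2*s)*(2*x)) x :=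
    (hasDerivAt_id x).add h2
  have h5 : HasDerivAt (fun y => Real.log (y + Real.sqrt (y^2-ε^2)))
      ((1 + 1/(2*s)*(2*x)) / (x+s)) x := h4.log hxs
  have h6 : HasDerivAt (fun y => y^2 + y * Real.sqrt (y^2-ε^2)
      - ε^2 * Real.log (y + Real.sqrt (y^2-ε^2)))
      (2*x + (1 * s + x * (1/(2*s)*(2*x))) - ε^2 * ((1 + 1/(2*s)*(2*x)) / (x+s))) x := by
    exact (((hasDerivAt_pow 2 x).add h3).sub (h5.const_mul (ε^2))).congr_deriv (by norm_num)
  have := h6.const_mul (1/(2*γ*ε^2))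
  refine this.congr_deriv ?_
  have hε2 : ε^2 ≠ 0 := pow_ne_zero 2 hε
  field_simp
  linear_combination (-(x+s)) * hssq

theorem stmt_19 (ε γ E₀ τ : ℝ) (hε : ε ≠ 0) (hγ : 0 < γ) (hE₀ : |ε| < E₀)
    (hτ : 0 < τ) (E : ℝ → ℝ)
    (hcont : ContinuousOn E (Set.Icc 0 τ))
    (h0 : E 0 = E₀) (hτE : E τ = |ε|)
    (hgt : ∀ t ∈ Set.Ico 0 τ, |ε| < E t)
    (hode : ∀ t ∈ Set.Ioo 0 τ,
      HasDerivAt E (-(γ * (E t - Real.sqrt ((E t) ^ 2 - ε ^ 2)))) t) :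
    τ = (1 / (2 * γ)) *
      (E₀ * (E₀ + Real.sqrt (E₀ ^ 2 - ε ^ 2)) / ε ^ 2
        - Real.log ((E₀ + Real.sqrt (E₀ ^ 2 - ε ^ 2)) / |ε|) - 1) := by
  have hεpos : 0 < |ε| := abs_pos.mpr hε
  have hε2 : (0:ℝ) < ε^2 := by positivity
  set F : ℝ → ℝ := fun y => (1/(2*γ*ε^2)) * (y^2 + y * Real.sqrt (y^2-ε^2)
      - ε^2 * Real.log (y + Real.sqrt (y^2-ε^2))) with hF
  set g : ℝ → ℝ := fun t => F (E t) + t with hg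
  -- F is continuous on Ici |ε|
  have hFcont : ContinuousOn F (Set.Ici |ε|) := by
    apply ContinuousOn.mul continuousOn_const
    apply ContinuousOn.sub
    · exact (continuousOn_pow 2).add (continuousOn_id.mul
        ((Real.continuous_sqrt.comp (by continuity)).continuousOn))
    · apply continuousOn_const.mul
      apply ContinuousOn.log
      · exact continuousOn_id.add ((Real.continuous_sqrt.comp (by continuity)).continuousOn)
      · intro y hy
        have : 0 < y + Real.sqrt (y^2 - ε^2) := by
          have : 0 < y := lt_of_lt_of_le hεpos hy
          positivity
        exact this.ne'
  -- E maps Icc 0 τ into Ici |ε|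
  have hmaps : Set.MapsTo E (Set.Icc 0 τ) (Set.Ici |ε|) := by
    intro t ht
    rcases eq_or_lt_of_le ht.2 with h | h
    · simp [h, hτE]
    · exact (hgt t ⟨ht.1, h⟩).le
  have hgcont : ContinuousOn g (Set.Icc 0 τ) :=
    (hFcont.comp hcont hmaps).add continuousOn_id
  -- g has zero derivative on (0, τ)
  have hgderiv : ∀ t ∈ Set.Ioo 0 τ, HasDerivAt g 0 t := by
    intro t ht
    have hEt : |ε| < E t := hgt t ⟨ht.1.le, ht.2⟩
    have hEtpos : 0 < E t := lt_of_le_of_lt (abs_nonneg ε) hEt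
    have hd : 0 < (E t)^2 - ε^2 := by nlinarith [abs_nonneg ε, sq_abs ε]
    set s := Real.sqrt ((E t)^2 - ε^2) with hs
    have hssq : s^2 = (E t)^2 - ε^2 := Real.sq_sqrt hd.le
    have hFD := F_hasDerivAt ε γ hε hγ hEt
    have hcomp := hFD.comp t (hode t ht)
    have : HasDerivAt g ((E t + s)/(γ*ε^2) * (-(γ * (E t - s))) + 1) t :=
      hcomp.add (hasDerivAt_id t)
    convert this using 1
    have hγ' : γ ≠ 0 := hγ.ne'
    field_simp
    linear_combination (-1) * hssq
  -- g is constant equal to g τ on (0, τ]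
  have key : ∀ a ∈ Set.Ioc 0 τ, g τ = g a := by
    intro a ha
    have hsub : Set.Icc a τ ⊆ Set.Icc 0 τ := Set.Icc_subset_Icc ha.1.le le_rfl
    have := constant_of_has_deriv_right_zero (f := g) (a := a) (b := τ)
      (hgcont.mono hsub) (fun x hx => by
        have : x ∈ Set.Ioo 0 τ := ⟨lt_of_lt_of_le ha.1 hx.1, hx.2⟩
        exact (hgderiv x this).hasDerivWithinAt)
    exact this τ ⟨ha.2, le_rfl⟩
  -- g 0 = g τ by continuity
  have h0τ : g 0 = g τ := by
    haveI : (nhdsWithin (0:ℝ) (Set.Ioc 0 τ)).NeBot := by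
      rw [← mem_closure_iff_nhdsWithin_neBot, closure_Ioc hτ.ne]
      exact ⟨le_rfl, hτ.le⟩
    have h1 : Filter.Tendsto g (nhdsWithin 0 (Set.Ioc 0 τ)) (nhds (g 0)) :=
      (hgcont 0 ⟨le_rfl, hτ.le⟩).mono Set.Ioc_subset_Icc_self
    have h2 : Filter.Tendsto g (nhdsWithin 0 (Set.Ioc 0 τ)) (nhds (g τ)) := by
      apply Filter.Tendsto.congr' _ tendsto_const_nhds
      filter_upwards [self_mem_nhdsWithin] with a ha
      exact key a ha
    exact tendsto_nhds_unique h1 h2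
  -- conclude
  have hgt0 : g 0 = F E₀ := by simp [hg, h0]
  have hgτ : g τ = F |ε| + τ := by simp [hg, hτE]
  have hτeq : τ = F E₀ - F |ε| := by
    rw [hgt0, hgτ] at h0τ; linarith
  rw [hτeq]
  have h1 : Real.sqrt (|ε|^2 - ε^2) = 0 := by
    rw [sq_abs]; simp
  have hs₀ : 0 ≤ Real.sqrt (E₀^2 - ε^2) := Real.sqrt_nonneg _
  have hE₀pos : 0 < E₀ := lt_of_le_of_lt (abs_nonneg ε) hE₀
  have hlog : Real.log ((E₀ + Real.sqrt (E₀^2 - ε^2)) / |ε|)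
      = Real.log (E₀ + Real.sqrt (E₀^2 - ε^2)) - Real.log |ε| := by
    apply Real.log_div (by positivity) hεpos.ne'
  simp only [hF, h1, hlog]
  rw [Real.log_abs]
  have : Real.log (|ε| + 0) = Real.log |ε| := by rw [Real.log_abs]; simp
  rw [this, Real.log_abs]
  have hγ' : γ ≠ 0 := hγ.ne'
  field_simp
  linear_combination -(abs_mul_abs_self ε)
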